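/- Let τ ∈ C_b(ℝ) with τ ∘ α = τ, let w ∈ C_b(ℝ), let f ∈ 𝒜_τ have compact support contained in K := supp f ⊆ {x : |τ(x)| ≤ ε} for some ε ∈ (0,1), and let T_{α,w}(f) := w·(f∘α). Then for every n ∈ ℕ, ‖T_{α,w}^n(f)‖_τ ≤ (sup_{t∈K} ∏_{j=0}^{n−1} |w(α^{j−n}(t))|) · ‖f‖_τ. -/

import Mathlib

open Filter

/-- `f` belongs to the Segal algebra `𝒜_τ`. -/
def MemSegal (τ f : ℝ → ℝ) : Prop :=
  Continuous f ∧ Tendsto f (cocompact ℝ) (nhds 0) ∧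
    Summable (fun k : ℕ => ⨆ x : ℝ, |f x * τ x ^ k|)

/-- The Segal norm `‖f‖_τ`. -/
noncomputable def segalNorm (τ f : ℝ → ℝ) : ℝ :=
  ∑' k : ℕ, ⨆ x : ℝ, |f x * τ x ^ k|

lemma iterFormula (α w : ℝ → ℝ) : ∀ (n : ℕ) (f : ℝ → ℝ) (x : ℝ),
    (fun F : ℝ → ℝ => fun y => w y * F (α y))^[n] f x
      = (∏ j ∈ Finset.range n, w (α^[j] x)) * f (α^[n] x) := by
  intro n
  induction n with
  | zero => simp
  | succ n ih =>
    intro f x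
    rw [Function.iterate_succ_apply, ih]
    simp only [Function.iterate_succ_apply', Finset.prod_range_succ]
    ring

lemma zpowSubApply (α : ℝ ≃ₜ ℝ) (j n : ℕ) (t : ℝ) :
    (α.toEquiv ^ ((j : ℤ) - (n : ℤ))) t = (⇑α)^[j] ((⇑α.symm)^[n] t) := by
  have h : ((α.toEquiv ^ (n:ℕ))⁻¹ : Equiv.Perm ℝ) t = (⇑α.symm)^[n] t := by
    rw [← inv_pow, ← Equiv.Perm.iterate_eq_pow]
    simp [Equiv.Perm.inv_def]
  rw [sub_eq_add_neg, zpow_add, zpow_neg, zpow_natCast, zpow_natCast, Equiv.Perm.mul_apply,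
    ← Equiv.Perm.iterate_eq_pow, h]
  rfl

/-- If `τ ∘ α = τ`, `f ∈ 𝒜_τ` has compact support `K ⊆ {|τ| ≤ ε}` for
some `ε ∈ (0,1)`, then for every `n`,
`‖T_{α,w}^n(f)‖_τ ≤ (sup_{t∈K} ∏_{j=0}^{n−1} |w(α^{j−n}(t))|)·‖f‖_τ`. -/
theorem weighted_composition_iterate_norm_bound (α : ℝ ≃ₜ ℝ) (τ w : ℝ → ℝ)
    (hτc : Continuous τ) (hτb : ∃ C, ∀ x, |τ x| ≤ C)
    (hinv : ∀ x, τ (α x) = τ x)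
    (hwc : Continuous w) (hwb : ∃ C, ∀ x, |w x| ≤ C)
    (f : ℝ → ℝ) (hf : MemSegal τ f) (hfc : HasCompactSupport f)
    (ε : ℝ) (hε0 : 0 < ε) (hε1 : ε < 1)
    (hsupp : tsupport f ⊆ {x : ℝ | |τ x| ≤ ε}) :
    ∀ n : ℕ,
      segalNorm τ ((fun F : ℝ → ℝ => fun y => w y * F (α y))^[n] f) ≤
        (⨆ t ∈ tsupport f,
            ∏ j ∈ Finset.range n, |w ((α.toEquiv ^ ((j : ℤ) - (n : ℤ))) t)|) *
          segalNorm τ f := by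
  intro n
  obtain ⟨Cw, hCw⟩ := hwb
  have hCw0 : 0 ≤ Cw := le_trans (abs_nonneg _) (hCw 0)
  obtain ⟨Cτ, hCτ⟩ := hτb
  set Cτ' := max Cτ 1 with hCτ'def
  have hCτ' : ∀ x, |τ x| ≤ Cτ' := fun x => (hCτ x).trans (le_max_left _ _)
  obtain ⟨Mf, hMf⟩ : ∃ M, ∀ x, ‖f x‖ ≤ M := hfc.exists_bound_of_continuous hf.1
  set K := tsupport f with hK
  set Q : ℝ → ℝ := fun t => ∏ j ∈ Finset.range n, |w ((⇑α)^[j] ((⇑α.symm)^[n] t))| with hQ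
  have hQnn : ∀ t, 0 ≤ Q t := fun t => Finset.prod_nonneg fun j _ => abs_nonneg _
  have hQbound : ∀ t, Q t ≤ Cw ^ n := by
    intro t
    calc Q t ≤ ∏ j ∈ Finset.range n, Cw :=
          Finset.prod_le_prod (fun j _ => abs_nonneg _) (fun j _ => hCw _)
      _ = Cw ^ n := by rw [Finset.prod_const, Finset.card_range]
  have hCQ : (⨆ t ∈ K, ∏ j ∈ Finset.range n, |w ((α.toEquiv ^ ((j : ℤ) - (n : ℤ))) t)|)
      = ⨆ t ∈ K, Q t := by
    simp only [zpowSubApply]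
    rfl
  set C : ℝ := ⨆ t ∈ K, ∏ j ∈ Finset.range n, |w ((α.toEquiv ^ ((j : ℤ) - (n : ℤ))) t)| with hCdef
  have hbdd : BddAbove (Set.range fun t => ⨆ _ : t ∈ K, Q t) := by
    refine ⟨Cw ^ n, ?_⟩
    rintro _ ⟨t, rfl⟩
    exact Real.iSup_le (fun _ => hQbound t) (pow_nonneg hCw0 n)
  have hC0 : 0 ≤ C := by
    rw [hCQ]
    exact Real.iSup_nonneg fun t => Real.iSup_nonneg fun _ => hQnn t
  have hQleC : ∀ t ∈ K, Q t ≤ C := by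
    intro t ht
    rw [hCQ]
    calc Q t = ⨆ _ : t ∈ K, Q t := (ciSup_pos (f := fun _ : t ∈ K => Q t) ht).symm
      _ ≤ ⨆ t, ⨆ _ : t ∈ K, Q t := le_ciSup hbdd t
  set S : ℕ → ℝ := fun k => ⨆ x : ℝ, |f x * τ x ^ k| with hSdef
  have hS0 : ∀ k, 0 ≤ S k := fun k => Real.iSup_nonneg fun x => abs_nonneg _
  have hSbdd : ∀ k, BddAbove (Set.range fun x => |f x * τ x ^ k|) := by
    intro k
    refine ⟨Mf * Cτ' ^ k, ?_⟩
    rintro _ ⟨x, rfl⟩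
    dsimp only
    rw [abs_mul, abs_pow]
    exact mul_le_mul (hMf x) (pow_le_pow_left₀ (abs_nonneg _) (hCτ' x) k)
      (pow_nonneg (abs_nonneg _) k) ((abs_nonneg _).trans (hMf 0))
  have hleS : ∀ k x, |f x * τ x ^ k| ≤ S k := fun k x => le_ciSup (hSbdd k) x
  have hτiter : ∀ (m : ℕ) (x : ℝ), τ ((⇑α)^[m] x) = τ x := by
    intro m
    induction m with
    | zero => intro x; rfl
    | succ m ih => intro x; rw [Function.iterate_succ_apply', hinv, ih]
  have hLI : Function.LeftInverse (⇑α.symm) (⇑α) := α.symm_apply_apply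
  have hpt : ∀ (k : ℕ) (x : ℝ),
      |(fun F : ℝ → ℝ => fun y => w y * F (α y))^[n] f x * τ x ^ k| ≤ C * S k := by
    intro k x
    rw [iterFormula]
    set s := (⇑α)^[n] x with hs
    have hQs : Q s = ∏ j ∈ Finset.range n, |w ((⇑α)^[j] x)| := by
      rw [hQ]
      simp only [hs, hLI.iterate n x]
    have key : |(∏ j ∈ Finset.range n, w ((⇑α)^[j] x)) * f s * τ x ^ k|
        = Q s * |f s * τ s ^ k| := by
      rw [← hτiter n x, ← hs, hQs, mul_assoc, abs_mul, Finset.abs_prod]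
    rw [key]
    by_cases hfs : f s = 0
    · simp [hfs, mul_nonneg hC0 (hS0 k)]
    · have hsK : s ∈ K := subset_tsupport f hfs
      exact mul_le_mul (hQleC s hsK) (hleS k s) (abs_nonneg _) hC0
  have hsup : ∀ k : ℕ,
      (⨆ x : ℝ, |(fun F : ℝ → ℝ => fun y => w y * F (α y))^[n] f x * τ x ^ k|) ≤ C * S k :=
    fun k => ciSup_le (hpt k)
  have hsumR : Summable (fun k => C * S k) := (hf.2.2).mul_left C
  have hnnL : ∀ k : ℕ,
      0 ≤ ⨆ x : ℝ, |(fun F : ℝ → ℝ => fun y => w y * F (α y))^[n] f x * τ x ^ k| :=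
    fun k => Real.iSup_nonneg fun x => abs_nonneg _
  have hsumL : Summable (fun k : ℕ =>
      ⨆ x : ℝ, |(fun F : ℝ → ℝ => fun y => w y * F (α y))^[n] f x * τ x ^ k|) :=
    Summable.of_nonneg_of_le hnnL hsup hsumR
  calc segalNorm τ ((fun F : ℝ → ℝ => fun y => w y * F (α y))^[n] f)
      ≤ ∑' k : ℕ, C * S k := Summable.tsum_le_tsum hsup hsumL hsumR
    _ = C * segalNorm τ f := by rw [segalNorm, ← tsum_mul_left]
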